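/- For each fixed positive integer n, the set of n-tuples (x_1, ..., x_n) of positive integers satisfying ∑_{i=1}^n 1/x_i = 1 is finite. -/

import Mathlib

/-- Sorted Egyptian-fraction tuples summing to `q`. -/
private def landauS (n : ℕ) (q : ℚ) : Set (Fin n → ℕ) :=
  {x | (∀ i, 0 < x i) ∧ Monotone x ∧ ∑ i, (1 : ℚ) / (x i) = q}

private lemma landauS_finite : ∀ n q, (landauS n q).Finite := by
  intro n
  induction n with
  | zero => intro q; exact Set.toFinite _
  | succ n ih =>
    intro q
    rcases le_or_gt q 0 with hq | hq
    · convert Set.finite_empty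
      ext x
      simp only [landauS, Set.mem_setOf_eq, Set.mem_empty_iff_false, iff_false, not_and]
      intro hpos _
      have hs : (0:ℚ) < ∑ i, (1:ℚ)/(x i) := by
        apply Finset.sum_pos
        · intro i _
          exact div_pos one_pos (by exact_mod_cast hpos i)
        · exact Finset.univ_nonempty
      intro hsum; rw [hsum] at hs; linarith
    · set K := ⌈((n : ℚ) + 1) / q⌉₊ with hKdef
      apply Set.Finite.subset
        (Set.Finite.biUnion (Finset.Icc 1 K).finite_toSet
          (t := fun k => (fun y : Fin n → ℕ => (Fin.cons k y : Fin (n+1) → ℕ)) '' landauS n (q - 1/(k:ℚ)))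
          (fun k _ => (ih (q - 1/(k:ℚ))).image (fun y : Fin n → ℕ => (Fin.cons k y : Fin (n+1) → ℕ))))
      rintro x ⟨hpos, hmono, hsum⟩
      have hx0pos : (0:ℚ) < (x 0 : ℚ) := by exact_mod_cast hpos 0
      have hle : ∀ i : Fin (n+1), (1:ℚ)/(x i) ≤ 1/(x 0) := by
        intro i
        apply one_div_le_one_div_of_le hx0pos
        exact_mod_cast hmono (Fin.zero_le i)
      have hqle : q ≤ ((n:ℚ)+1) * (1/(x 0)) := by
        calc q = ∑ i, (1:ℚ)/(x i) := hsum.symm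
          _ ≤ ∑ _i : Fin (n+1), (1:ℚ)/(x 0) := Finset.sum_le_sum (fun i _ => hle i)
          _ = ((n:ℚ)+1) * (1/(x 0)) := by
              rw [Finset.sum_const, Finset.card_univ, Fintype.card_fin]
              ring
      have hqle' : q * (x 0 : ℚ) ≤ (n:ℚ)+1 := by
        have h := mul_le_mul_of_nonneg_right hqle hx0pos.le
        rwa [mul_assoc, one_div, inv_mul_cancel₀ hx0pos.ne', mul_one] at h
      have hx0K : x 0 ≤ K := by
        have h1 : ((x 0 : ℕ) : ℚ) ≤ ((n:ℚ)+1)/q := by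
          rw [le_div_iff₀ hq]
          linarith [mul_comm q ((x 0 : ℕ) : ℚ)]
        have h2 : ((x 0 : ℕ) : ℚ) ≤ (K : ℚ) := h1.trans (Nat.le_ceil _)
        exact_mod_cast h2
      refine Set.mem_biUnion (Finset.mem_coe.2 (Finset.mem_Icc.2 ⟨hpos 0, hx0K⟩)) ?_
      refine ⟨Fin.tail x, ⟨fun i => hpos i.succ, fun i j hij => hmono (Fin.succ_le_succ_iff.2 hij), ?_⟩,
        Fin.cons_self_tail x⟩
      have := Fin.sum_univ_succ (fun i => (1:ℚ)/(x i))
      rw [hsum] at this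
      have hx0 : ((x 0 : ℕ) : ℚ) = (x 0 : ℕ) := rfl
      simp only [Fin.tail]
      linarith [this]

/-- Landau's finiteness theorem: for fixed `n`, there are finitely many `n`-tuples of
positive integers `x` with `∑ i, 1 / x i = 1`. -/
theorem landau_finiteness (n : ℕ) (hn : 1 ≤ n) :
    {x : Fin n → ℕ | (∀ i, 0 < x i) ∧ ∑ i, (1 : ℚ) / (x i) = 1}.Finite := by
  apply Set.Finite.subset
    (Set.finite_iUnion (fun σ : Equiv.Perm (Fin n) =>
      (landauS_finite n 1).image (fun y => y ∘ σ)))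
  rintro x ⟨hpos, hsum⟩
  set σ := Tuple.sort x with hσ
  refine Set.mem_iUnion.2 ⟨σ⁻¹, x ∘ σ, ⟨fun i => hpos (σ i), Tuple.monotone_sort x, ?_⟩, ?_⟩
  · exact (Fintype.sum_equiv σ (fun i => (1:ℚ)/((x ∘ σ) i)) (fun i => (1:ℚ)/(x i))
      (fun i => rfl)).trans hsum
  · funext i
    simp [Function.comp]
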